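/- Let k, ℓ be integers with k ≥ ℓ+2, let T be an ℓ-complete tree decomposition of a graph G rooted at a node u, and let α be a (V∖B_u)-coherent proper k-coloring of G in which some color a does not appear on B_u. Then, by a sequence of single-vertex recolorings through proper k-colorings in which every vertex of V∖B_u is recolored at most once and no vertex of B_u is recolored, α can be transformed into a (V∖B_u)-coherent proper k-coloring in which no vertex of G is colored a. -/

import Mathlib

open SimpleGraph

/-- A proper `k`-coloring of a graph. -/
def Proper {V : Type} (G : SimpleGraph V) {k : ℕ} (c : V → Fin k) : Prop :=
  ∀ ⦃x y⦄, G.Adj x y → c x ≠ c y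

/-- The `k`-recoloring graph of `G`: vertices are the proper `k`-colorings of `G`,
two colorings being adjacent when they differ on exactly one vertex. -/
def recolorGraph {V : Type} (G : SimpleGraph V) (k : ℕ) :
    SimpleGraph {c : V → Fin k // Proper G c} where
  Adj c d := ∃! v, c.1 v ≠ d.1 v
  symm := by
    constructor
    rintro c d ⟨v, hv, hu⟩
    exact ⟨v, hv.symm, fun w hw => hu w hw.symm⟩
  loopless := by
    constructor
    rintro c ⟨v, hv, -⟩
    exact hv rfl

/-- `c` is a greedy (grundy) coloring of `G` relative to some vertex order:
equivalently, it is proper and every vertex sees every smaller color in its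
neighborhood. -/
def IsGrundy {V : Type} (G : SimpleGraph V) (c : V → ℕ) : Prop :=
  (∀ ⦃x y⦄, G.Adj x y → c x ≠ c y) ∧ ∀ v, ∀ j < c v, ∃ u, G.Adj v u ∧ c u = j

/-- The grundy number of `G`: the largest number of colors of a greedy coloring. -/
noncomputable def grundyNum {V : Type} [Fintype V] (G : SimpleGraph V) : ℕ :=
  sSup {ℓ | ∃ c : V → ℕ, IsGrundy G c ∧ (Finset.univ.image c).card = ℓ}

/-- A tree decomposition of the graph `G`, with nodes indexed by `ι`. -/
structure TreeDecomp {V : Type} (G : SimpleGraph V) (ι : Type) where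
  T : SimpleGraph ι
  isTree : T.IsTree
  bag : ι → Finset V
  mem_bag : ∀ x : V, ∃ u, x ∈ bag u
  edge_bag : ∀ ⦃x y⦄, G.Adj x y → ∃ u, x ∈ bag u ∧ y ∈ bag u
  support_connected : ∀ x : V, (T.induce {u | x ∈ bag u}).Connected

/-- The treewidth of a finite graph: the least `w` such that some tree decomposition
has all bags of size at most `w + 1`. -/
noncomputable def treewidth {V : Type} [Fintype V] (G : SimpleGraph V) : ℕ :=
  sInf {w | ∃ (m : ℕ) (td : TreeDecomp G (Fin m)), ∀ u, (td.bag u).card ≤ w + 1}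

/-- An `ℓ`-complete tree decomposition: every bag has size `ℓ+1` and adjacent
bags intersect on `ℓ` vertices. -/
def TreeDecomp.IsComplete {V ι : Type} [DecidableEq V] {G : SimpleGraph V}
    (td : TreeDecomp G ι) (ℓ : ℕ) : Prop :=
  (∀ u, (td.bag u).card = ℓ + 1) ∧
  ∀ ⦃u v⦄, td.T.Adj u v → (td.bag u ∩ td.bag v).card = ℓ

/-- `x` and `y` are `T`-parents: for some adjacent nodes `u, v`,
`x = B_u ∖ B_v` and `y = B_v ∖ B_u`. -/
def TreeDecomp.Parent {V ι : Type} [DecidableEq V] {G : SimpleGraph V}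
    (td : TreeDecomp G ι) (x y : V) : Prop :=
  ∃ u v, td.T.Adj u v ∧ td.bag u \ td.bag v = {x} ∧ td.bag v \ td.bag u = {y}

/-- A coloring is `X`-coherent (relative to a tree decomposition) if parents in `X`
get the same color and every vertex of `X` is the unique vertex of its color in
every bag containing it. -/
def TreeDecomp.Coherent {V ι : Type} [DecidableEq V] {G : SimpleGraph V}
    (td : TreeDecomp G ι) (X : Set V) {k : ℕ} (c : V → Fin k) : Prop :=
  (∀ ⦃x y⦄, x ∈ X → y ∈ X → td.Parent x y → c x = c y) ∧
  ∀ u, ∀ x ∈ X, x ∈ td.bag u → ∀ y ∈ td.bag u, c y = c x → y = x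

/-- The subtree rooted at `v` when `T` is rooted at `u`: the nodes all of whose
walks to the root `u` pass through `v`. -/
def subtreeAt {ι : Type} (T : SimpleGraph ι) (u v : ι) : Set ι :=
  {p | ∀ w : T.Walk p u, v ∈ w.support}

/-- `G` contains an induced path on four vertices. -/
def HasInducedP4 {V : Type} (G : SimpleGraph V) : Prop :=
  ∃ a b c d : V, a ≠ b ∧ a ≠ c ∧ a ≠ d ∧ b ≠ c ∧ b ≠ d ∧ c ≠ d ∧
    G.Adj a b ∧ G.Adj b c ∧ G.Adj c d ∧ ¬G.Adj a c ∧ ¬G.Adj a d ∧ ¬G.Adj b d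

/-- `G` contains an induced path on five vertices. -/
def HasInducedP5 {V : Type} (G : SimpleGraph V) : Prop :=
  ∃ a b c d e : V, a ≠ b ∧ a ≠ c ∧ a ≠ d ∧ a ≠ e ∧ b ≠ c ∧ b ≠ d ∧ b ≠ e ∧
    c ≠ d ∧ c ≠ e ∧ d ≠ e ∧
    G.Adj a b ∧ G.Adj b c ∧ G.Adj c d ∧ G.Adj d e ∧
    ¬G.Adj a c ∧ ¬G.Adj a d ∧ ¬G.Adj a e ∧ ¬G.Adj b d ∧ ¬G.Adj b e ∧ ¬G.Adj c e

/-- A walk is an induced path if it is a path and the only adjacencies among its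
vertices are its own edges. -/
def IsInducedPathW {V : Type} (G : SimpleGraph V) {x y : V} (p : G.Walk x y) : Prop :=
  p.IsPath ∧ ∀ ⦃u v⦄, u ∈ p.support → v ∈ p.support → G.Adj u v → s(u, v) ∈ p.edges

/-- A graph is distance-hereditary if any two induced paths between the same pair of
vertices have the same length. -/
def IsDistanceHereditary {V : Type} (G : SimpleGraph V) : Prop :=
  ∀ (x y : V) (p q : G.Walk x y),
    IsInducedPathW G p → IsInducedPathW G q → p.length = q.length

/-- `X` is a module of `G`: every outside vertex is adjacent to all of `X` or none of it. -/
def IsModule {V : Type} (G : SimpleGraph V) (X : Set V) : Prop :=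
  ∀ y ∉ X, (∀ x ∈ X, G.Adj y x) ∨ ∀ x ∈ X, ¬G.Adj y x

/-- `X` is a strong module of `G`: a module of size at least two which overlaps
no other module. -/
def IsStrongModule {V : Type} (G : SimpleGraph V) (X : Set V) : Prop :=
  IsModule G X ∧ 2 ≤ X.ncard ∧
    ∀ M : Set V, IsModule G M → Disjoint M X ∨ M ⊆ X ∨ X ⊆ M

/-- The setoid identifying all elements of `C`. -/
def mergedSetoid {V : Type} (C : Set V) : Setoid V where
  r x y := x = y ∨ (x ∈ C ∧ y ∈ C)
  iseqv := by
    refine ⟨fun x => Or.inl rfl, ?_, ?_⟩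
    · rintro x y (rfl | ⟨h1, h2⟩)
      · exact Or.inl rfl
      · exact Or.inr ⟨h2, h1⟩
    · rintro x y z (rfl | ⟨h1, h2⟩) (rfl | ⟨h3, h4⟩)
      · exact Or.inl rfl
      · exact Or.inr ⟨h3, h4⟩
      · exact Or.inr ⟨h1, h2⟩
      · exact Or.inr ⟨h1, h4⟩

/-- The merged graph on an independent set `C`: all vertices of `C` are identified
into a single vertex. -/
def mergedGraph {V : Type} (G : SimpleGraph V) (C : Set V)
    (hC : ∀ x ∈ C, ∀ y ∈ C, ¬G.Adj x y) :
    SimpleGraph (Quotient (mergedSetoid C)) where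
  Adj a b := ∃ x y, G.Adj x y ∧ Quotient.mk (mergedSetoid C) x = a ∧
    Quotient.mk (mergedSetoid C) y = b
  symm := by
    constructor
    rintro a b ⟨x, y, hxy, rfl, rfl⟩
    exact ⟨y, x, hxy.symm, rfl, rfl⟩
  loopless := by
    constructor
    rintro a ⟨x, y, hxy, rfl, h⟩
    rcases Quotient.exact h with rfl | ⟨h1, h2⟩
    · exact G.ne_of_adj hxy rfl
    · exact hC x h2 y h1 hxy

/-- `α` can be transformed into `β` by single-vertex recolorings through proper
`k`-colorings of `G`, recoloring each vertex `v` at most `bound v` times. -/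
def RecolorSeqLe {V : Type} (G : SimpleGraph V) {k : ℕ} (α β : V → Fin k)
    (bound : V → ℕ) : Prop :=
  ∃ (m : ℕ) (c : ℕ → V → Fin k),
    c 0 = α ∧ c m = β ∧ (∀ i ≤ m, Proper G (c i)) ∧
    (∀ i < m, ∃! v, c i v ≠ c (i + 1) v) ∧
    ∀ v, ((Finset.range m).filter fun i => c i v ≠ c (i + 1) v).card ≤ bound v

/-- A modular coloring: for every strong module `M` which is the disjoint union of
`p ≥ 2` strong modules `Ms 0, …, Ms (p-1)`, the coloring uses exactly `χ(H[M])`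
colors on `M`, and each `Ms i` receives exactly the first `χ(H[Ms i])` of those colors. -/
def ModularColoring {W : Type} (H : SimpleGraph W) {k : ℕ} (c : W → Fin k) : Prop :=
  ∀ (M : Set W) (p : ℕ) (Ms : Fin p → Set W), 2 ≤ p →
    IsStrongModule H M → (∀ i, IsStrongModule H (Ms i)) →
    (Pairwise fun i j => Disjoint (Ms i) (Ms j)) →
    M = ⋃ i, Ms i →
    (∀ i j, i ≠ j → ∀ x ∈ Ms i, ∀ y ∈ Ms j, ¬H.Adj x y) →
    ((c '' M).ncard : ℕ∞) = (H.induce M).chromaticNumber ∧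
    ∀ i, ((c '' Ms i).ncard : ℕ∞) = (H.induce (Ms i)).chromaticNumber ∧
      ∀ a ∈ c '' Ms i, ∀ b ∈ c '' M, b ≤ a → b ∈ c '' Ms i

/-- A frozen `k`-coloring: a proper coloring in which every vertex sees every other
color in its neighborhood. -/
def Frozen {V : Type} (G : SimpleGraph V) {k : ℕ} (c : V → Fin k) : Prop :=
  Proper G c ∧ ∀ x, ∀ b : Fin k, b ≠ c x → ∃ y, G.Adj x y ∧ c y = b



set_option linter.unusedSectionVars false

namespace ElimAux

variable {ι : Type} [DecidableEq ι] {T : SimpleGraph ι}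

lemma endpoint_eq_of_length_zero {A B : ι} (w : T.Walk A B) (h : w.length = 0) : A = B := by
  cases w with
  | nil => rfl
  | cons h' w' => simp [SimpleGraph.Walk.length_cons] at h

/-- The unique path between two vertices of a tree. -/
noncomputable def thePath (hT : T.IsTree) (p q : ι) : T.Walk p q :=
  (hT.existsUnique_path p q).choose

lemma thePath_isPath (hT : T.IsTree) (p q : ι) : (thePath hT p q).IsPath :=
  (hT.existsUnique_path p q).choose_spec.1

lemma thePath_unique (hT : T.IsTree) {p q : ι} (w : T.Walk p q) (hw : w.IsPath) :
    w = thePath hT p q :=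
  (hT.existsUnique_path p q).choose_spec.2 w hw

variable (hT : T.IsTree) (rt : ι)

/-- `v` lies on the unique path from `p` to the root. -/
def R (p v : ι) : Prop := v ∈ (thePath hT p rt).support

/-- distance-to-root measure -/
noncomputable def meas (p : ι) : ℕ := (thePath hT p rt).length

lemma thePath_self : thePath hT rt rt = Walk.nil :=
  (thePath_unique hT Walk.nil (Walk.IsPath.nil)).symm

lemma meas_rt : meas hT rt rt = 0 := by
  unfold meas; rw [thePath_self]; rfl

lemma eq_rt_of_meas_eq_zero {p : ι} (h : meas hT rt p = 0) : p = rt :=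
  endpoint_eq_of_length_zero _ h

lemma R_self (p : ι) : R hT rt p p := Walk.start_mem_support _

lemma R_rt (p : ι) : R hT rt p rt := Walk.end_mem_support _

lemma mem_walk_of_R {p v : ι} (h : R hT rt p v) (w : T.Walk p rt) : v ∈ w.support := by
  have hb : w.bypass = thePath hT p rt := thePath_unique hT _ w.bypass_isPath
  exact w.support_bypass_subset (hb ▸ h)

lemma thePath_dropUntil {p v : ι} (h : R hT rt p v) :
    (thePath hT p rt).dropUntil v h = thePath hT v rt :=
  thePath_unique hT _ ((thePath_isPath hT p rt).dropUntil h)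

lemma meas_le_of_R {p v : ι} (h : R hT rt p v) : meas hT rt v ≤ meas hT rt p := by
  have := Walk.length_dropUntil_le (thePath hT p rt) h
  rwa [thePath_dropUntil hT rt h] at this

lemma meas_lt_of_R {p v : ι} (h : R hT rt p v) (hne : v ≠ p) :
    meas hT rt v < meas hT rt p := by
  have hspec := Walk.take_spec (thePath hT p rt) h
  have hlen := congrArg Walk.length hspec
  rw [Walk.length_append, thePath_dropUntil hT rt h] at hlen
  have hpos : 0 < ((thePath hT p rt).takeUntil v h).length := by
    rcases Nat.eq_zero_or_pos ((thePath hT p rt).takeUntil v h).length with h0 | h0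
    · exact absurd (endpoint_eq_of_length_zero _ h0).symm hne
    · exact h0
  unfold meas
  omega

lemma R_trans {p v v' : ι} (h1 : R hT rt p v) (h2 : R hT rt v v') : R hT rt p v' := by
  have : v' ∈ ((thePath hT p rt).dropUntil v h1).support := by
    rw [thePath_dropUntil hT rt h1]; exact h2
  exact (thePath hT p rt).support_dropUntil_subset h1 this

lemma R_antisymm {v v' : ι} (h1 : R hT rt v v') (h2 : R hT rt v' v) : v = v' := by
  by_contra hne
  exact absurd (meas_lt_of_R hT rt h1 (Ne.symm hne)) (not_lt.2 (le_of_lt (meas_lt_of_R hT rt h2 hne)))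

/-- Splitting: if `v` and `v'` are both on the path from `p` to the root, one is on
the path from the other to the root. -/
lemma R_total {p v v' : ι} (h1 : R hT rt p v) (h2 : R hT rt p v') :
    R hT rt v v' ∨ R hT rt v' v := by
  have hsplit := Walk.take_spec (thePath hT p rt) h1
  have hmem : v' ∈ ((thePath hT p rt).takeUntil v h1).support ∨
      v' ∈ ((thePath hT p rt).dropUntil v h1).support := by
    have h2' := h2
    unfold R at h2'
    rw [← hsplit, Walk.mem_support_append_iff] at h2'
    exact h2'
  rcases hmem with hmem | hmem
  · right
    have hAp : ((thePath hT p rt).takeUntil v h1).IsPath := (thePath_isPath hT p rt).takeUntil h1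
    have hW : ((((thePath hT p rt).takeUntil v h1).dropUntil v' hmem).append
        (thePath hT v rt)).IsPath := by
      rw [Walk.isPath_def, Walk.support_append, List.nodup_append]
      refine ⟨(hAp.dropUntil hmem).support_nodup, ?_, ?_⟩
      · have hvp : (thePath hT v rt).IsPath := thePath_isPath hT v rt
        have := hvp.support_nodup
        rw [(thePath hT v rt).support_eq_cons] at this
        exact (List.nodup_cons.mp this).2
      · intro z hz w hz' hzw
        subst hzw
        have hz1 : z ∈ ((thePath hT p rt).takeUntil v h1).support :=
          Walk.support_dropUntil_subset _ hmem hz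
        have hz2 : z ∈ ((thePath hT p rt).dropUntil v h1).support.tail := by
          rw [thePath_dropUntil hT rt h1]; exact hz'
        have hnodup := (thePath_isPath hT p rt).support_nodup
        rw [← hsplit, Walk.support_append, List.nodup_append] at hnodup
        exact hnodup.2.2 z hz1 z hz2 rfl
    have huniq := thePath_unique hT _ hW
    unfold R
    rw [← huniq, Walk.mem_support_append_iff]
    left
    exact Walk.end_mem_support _
  · left
    unfold R
    rw [← thePath_dropUntil hT rt h1]
    exact hmem

lemma R_le_total {p v v' : ι} (h1 : R hT rt p v) (h2 : R hT rt p v')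
    (hm : meas hT rt v' ≤ meas hT rt v) : R hT rt v v' := by
  rcases R_total hT rt h1 h2 with h | h
  · exact h
  · rcases eq_or_ne v v' with rfl | hne
    · exact R_self hT rt v
    · exact absurd (meas_lt_of_R hT rt h hne) (not_lt.2 hm)

lemma R_inj {p v v' : ι} (h1 : R hT rt p v) (h2 : R hT rt p v')
    (hm : meas hT rt v = meas hT rt v') : v = v' := by
  rcases R_total hT rt h1 h2 with h | h
  · by_contra hne
    have := meas_lt_of_R hT rt h (Ne.symm hne); omega
  · by_contra hne
    have := meas_lt_of_R hT rt h hne; omega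

lemma path_cons_of_R {q r : ι} (h : T.Adj q r) (hR : R hT rt q r) :
    thePath hT q rt = Walk.cons h (thePath hT r rt) := by
  have hq : q ∉ (thePath hT r rt).support := by
    intro hmem
    have h1 : meas hT rt q < meas hT rt r := meas_lt_of_R hT rt hmem h.ne
    have h2 : meas hT rt r < meas hT rt q := meas_lt_of_R hT rt hR h.ne'
    omega
  have : (Walk.cons h (thePath hT r rt)).IsPath :=
    (Walk.cons_isPath_iff h _).2 ⟨thePath_isPath hT r rt, hq⟩
  exact (thePath_unique hT _ this).symm

lemma meas_succ_of_R {q r : ι} (h : T.Adj q r) (hR : R hT rt q r) :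
    meas hT rt q = meas hT rt r + 1 := by
  unfold meas
  rw [path_cons_of_R hT rt h hR, Walk.length_cons]

lemma rootward_unique {q r r' : ι} (h : T.Adj q r) (hR : R hT rt q r)
    (h' : T.Adj q r') (hR' : R hT rt q r') : r = r' := by
  have e1 := path_cons_of_R hT rt h hR
  have e2 := path_cons_of_R hT rt h' hR'
  have hs := congrArg Walk.support (e1.symm.trans e2)
  rw [Walk.support_cons, Walk.support_cons, (thePath hT r rt).support_eq_cons,
    (thePath hT r' rt).support_eq_cons] at hs
  have := List.head_eq_of_cons_eq (List.tail_eq_of_cons_eq hs)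
  exact this

lemma second_vertex {p : ι} (hpu : p ≠ rt) :
    ∃ (s : ι) (h : T.Adj p s), R hT rt p s ∧ thePath hT p rt = Walk.cons h (thePath hT s rt) := by
  cases hw : thePath hT p rt with
  | nil => exact absurd rfl hpu
  | cons h w' =>
    rename_i s
    have hw'path : w'.IsPath := by
      have := thePath_isPath hT p rt
      rw [hw] at this
      exact ((Walk.cons_isPath_iff h w').1 this).1
    have hw' : w' = thePath hT s rt := thePath_unique hT _ hw'path
    refine ⟨s, h, ?_, by rw [hw']⟩
    unfold R
    rw [hw, Walk.support_cons]
    exact List.mem_cons_of_mem _ (Walk.start_mem_support _)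

/-- Separation: if some vertex of a connected set has `sep ∉ S` on its root path,
then every vertex of `S` does. -/
lemma SEP {S : Set ι} (hconn : (T.induce S).Connected) {p sep : ι} (hp : p ∈ S)
    (hsep : sep ∉ S) (hR : R hT rt p sep) {t' : ι} (ht' : t' ∈ S) : R hT rt t' sep := by
  obtain ⟨W0⟩ := hconn.preconnected ⟨p, hp⟩ ⟨t', ht'⟩
  set Wm := W0.map (SimpleGraph.Embedding.induce S).toHom with hWmdef
  have hWm : ∀ z ∈ Wm.support, z ∈ S := by
    intro z hz
    rw [hWmdef, Walk.support_map] at hz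
    obtain ⟨z', _, rfl⟩ := List.mem_map.1 hz
    exact z'.2
  have hsep' : sep ∈ (Wm.append (thePath hT t' rt)).support :=
    mem_walk_of_R hT rt hR _
  replace hsep' := (Walk.mem_support_append_iff _ _).1 hsep'
  rcases hsep' with h | h
  · exact absurd (hWm _ h) hsep
  · exact h



section Decomp

variable {n ℓ k : ℕ} {V : Type} [DecidableEq V]
  {G : SimpleGraph V} (td : TreeDecomp G (Fin n)) (hcomp : td.IsComplete ℓ) (u : Fin n)

include hcomp

/-- Gate data for a vertex `x ∉ B_u`: the edge of the tree where `x` is introduced. -/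
def IsGate (x : V) (q r : Fin n) (y : V) : Prop :=
  td.T.Adj q r ∧ R td.isTree u q r ∧ td.bag q \ td.bag r = {x} ∧ td.bag r \ td.bag q = {y}

lemma diff_singleton {q r : Fin n} (hadj : td.T.Adj q r) {x : V} (hxq : x ∈ td.bag q)
    (hxr : x ∉ td.bag r) : td.bag q \ td.bag r = {x} := by
  have hcard : (td.bag q \ td.bag r).card = 1 := by
    have h1 : td.bag q \ td.bag r = td.bag q \ (td.bag q ∩ td.bag r) := by
      rw [Finset.sdiff_inter_self_left]
    rw [h1, Finset.card_sdiff_of_subset Finset.inter_subset_left, hcomp.1 q, hcomp.2 hadj]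
    omega
  obtain ⟨b, hb⟩ := Finset.card_eq_one.1 hcard
  have : x ∈ td.bag q \ td.bag r := Finset.mem_sdiff.2 ⟨hxq, hxr⟩
  rw [hb] at this ⊢
  rw [Finset.mem_singleton] at this
  rw [this]

namespace IsGate

variable {td} {u} {x : V} {q r : Fin n} {y : V} (hg : IsGate td u x q r y)

omit hcomp
include hg

lemma adj : td.T.Adj q r := hg.1
lemma rootward : R td.isTree u q r := hg.2.1
lemma mem_q : x ∈ td.bag q := by
  have := hg.2.2.1
  have : x ∈ td.bag q \ td.bag r := by rw [this]; exact Finset.mem_singleton_self x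
  exact (Finset.mem_sdiff.1 this).1
lemma not_mem_r : x ∉ td.bag r := by
  have h := hg.2.2.1
  have : x ∈ td.bag q \ td.bag r := by rw [h]; exact Finset.mem_singleton_self x
  exact (Finset.mem_sdiff.1 this).2
lemma y_mem_r : y ∈ td.bag r := by
  have h := hg.2.2.2
  have : y ∈ td.bag r \ td.bag q := by rw [h]; exact Finset.mem_singleton_self y
  exact (Finset.mem_sdiff.1 this).1
lemma y_not_mem_q : y ∉ td.bag q := by
  have h := hg.2.2.2
  have : y ∈ td.bag r \ td.bag q := by rw [h]; exact Finset.mem_singleton_self y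
  exact (Finset.mem_sdiff.1 this).2

lemma mem_r_of_mem_q {v : V} (hv : v ∈ td.bag q) (hvx : v ≠ x) : v ∈ td.bag r := by
  by_contra hvr
  have : v ∈ td.bag q \ td.bag r := Finset.mem_sdiff.2 ⟨hv, hvr⟩
  rw [hg.2.2.1, Finset.mem_singleton] at this
  exact hvx this

lemma mem_q_of_mem_r {v : V} (hv : v ∈ td.bag r) (hvy : v ≠ y) : v ∈ td.bag q := by
  by_contra hvq
  have : v ∈ td.bag r \ td.bag q := Finset.mem_sdiff.2 ⟨hv, hvq⟩
  rw [hg.2.2.2, Finset.mem_singleton] at this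
  exact hvy this

lemma erase_eq : (td.bag q).erase x = (td.bag r).erase y := by
  ext v
  simp only [Finset.mem_erase]
  constructor
  · rintro ⟨hvx, hv⟩
    exact ⟨fun hvy => hg.y_not_mem_q (hvy ▸ hv), hg.mem_r_of_mem_q hv hvx⟩
  · rintro ⟨hvy, hv⟩
    exact ⟨fun hvx => hg.not_mem_r (hvx ▸ hv), hg.mem_q_of_mem_r hv hvy⟩

/-- The introduced vertex of a gate does not belong to the root bag. -/
lemma not_mem_rootbag : x ∉ td.bag u := by
  intro hx
  have hsep : R td.isTree u u r := by
    refine SEP td.isTree u (td.support_connected x) (p := q) hg.mem_q hg.not_mem_r hg.rootward ?_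
    exact hx
  have : r = u := by
    have h0 : meas td.isTree u r ≤ meas td.isTree u u := meas_le_of_R _ _ hsep
    rw [meas_rt] at h0
    exact eq_rt_of_meas_eq_zero _ _ (Nat.le_zero.1 h0)
  exact hg.not_mem_r (this ▸ hx)

end IsGate

include hcomp

lemma exists_gate_aux {x : V} (hxu : x ∉ td.bag u) :
    ∀ (m : ℕ) (p : Fin n), meas td.isTree u p ≤ m → x ∈ td.bag p →
      ∃ q r y, IsGate td u x q r y ∧ R td.isTree u p q := by
  intro m
  induction m with
  | zero =>
    intro p hm hx
    have : p = u := eq_rt_of_meas_eq_zero _ _ (Nat.le_zero.1 hm)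
    exact absurd (this ▸ hx) hxu
  | succ m ih =>
    intro p hm hx
    rcases eq_or_ne p u with rfl | hpu
    · exact absurd hx hxu
    obtain ⟨s, hadj, hRs, hcons⟩ := second_vertex td.isTree u hpu
    have hmeas : meas td.isTree u s + 1 = meas td.isTree u p :=
      (meas_succ_of_R td.isTree u hadj hRs).symm
    by_cases hxs : x ∈ td.bag s
    · obtain ⟨q, r, y, hg, hRq⟩ := ih s (by omega) hxs
      exact ⟨q, r, y, hg, R_trans _ _ hRs hRq⟩
    · have hd1 : td.bag p \ td.bag s = {x} := diff_singleton td hcomp hadj hx hxs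
      have hcard : (td.bag s \ td.bag p).card = 1 := by
        have h1 : td.bag s \ td.bag p = td.bag s \ (td.bag s ∩ td.bag p) := by
          rw [Finset.sdiff_inter_self_left]
        rw [h1, Finset.card_sdiff_of_subset Finset.inter_subset_left, hcomp.1 s,
          Finset.inter_comm, hcomp.2 hadj]
        omega
      obtain ⟨y, hy⟩ := Finset.card_eq_one.1 hcard
      exact ⟨p, s, y, ⟨hadj, hRs, hd1, hy⟩, R_self _ _ p⟩

lemma exists_gate {x : V} (hxu : x ∉ td.bag u) {p : Fin n} (hx : x ∈ td.bag p) :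
    ∃ q r y, IsGate td u x q r y ∧ R td.isTree u p q :=
  exists_gate_aux td hcomp u hxu (meas td.isTree u p) p le_rfl hx

lemma gate_unique {x : V} {q r : Fin n} {y : V} {q' r' : Fin n} {y' : V}
    (hg : IsGate td u x q r y) (hg' : IsGate td u x q' r' y') :
    q = q' ∧ r = r' ∧ y = y' := by
  classical
  set S : Set (Fin n) := {t | x ∈ td.bag t} with hS
  have hconn := td.support_connected x
  have hqS : q ∈ S := hg.mem_q
  have hq'S : q' ∈ S := hg'.mem_q
  have hrS : r ∉ S := hg.not_mem_r
  have hr'S : r' ∉ S := hg'.not_mem_r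
  -- every vertex of S has r and r' on its root path
  have hRr : ∀ t' ∈ S, R td.isTree u t' r := fun t' ht' =>
    SEP td.isTree u hconn hqS hrS hg.rootward ht'
  have hRr' : ∀ t' ∈ S, R td.isTree u t' r' := fun t' ht' =>
    SEP td.isTree u hconn hq'S hr'S hg'.rootward ht'
  -- r = r'
  have hrr' : r = r' := by
    have h1 : R td.isTree u r r' := by
      have : r' ∈ (thePath td.isTree q u).support := hRr' q hqS
      rw [path_cons_of_R td.isTree u hg.adj hg.rootward, Walk.support_cons] at this
      rcases List.mem_cons.1 this with h | h
      · exfalso; rw [h] at hr'S; exact hr'S hqS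
      · exact h
    have h2 : R td.isTree u r' r := by
      have : r ∈ (thePath td.isTree q' u).support := hRr q' hq'S
      rw [path_cons_of_R td.isTree u hg'.adj hg'.rootward, Walk.support_cons] at this
      rcases List.mem_cons.1 this with h | h
      · exfalso; rw [h] at hrS; exact hrS hq'S
      · exact h
    exact R_antisymm _ _ h1 h2
  -- q = q'
  have hqq' : q = q' := by
    by_contra hne
    obtain ⟨W0⟩ := hconn.preconnected ⟨q, hqS⟩ ⟨q', hq'S⟩
    set Wm := W0.map (SimpleGraph.Embedding.induce S).toHom with hWmdef
    have hWmS : ∀ z ∈ Wm.support, z ∈ S := by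
      intro z hz
      rw [hWmdef, Walk.support_map] at hz
      obtain ⟨z', _, rfl⟩ := List.mem_map.1 hz
      exact z'.2
    set P1 := Wm.bypass with hP1
    have hP1path : P1.IsPath := Wm.bypass_isPath
    have hP1S : ∀ z ∈ P1.support, z ∈ S := fun z hz => hWmS z (Wm.support_bypass_subset hz)
    have hrP1 : r ∉ P1.support := fun h => hrS (hP1S r h)
    have hadj2 : td.T.Adj q' r := hrr' ▸ hg'.adj
    set C : td.T.Walk r r := Walk.cons hg.adj.symm (P1.concat hadj2) with hC
    have hcyc : C.IsCycle := by
      constructor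
      constructor
      constructor
      · -- edges nodup
        erw [hC, Walk.edges_cons, Walk.edges_concat, List.concat_eq_append, List.nodup_cons]
        constructor
        · intro hmem
          rcases List.mem_append.1 hmem with h | h
          · exact hrP1 (Walk.fst_mem_support_of_mem_edges P1 h)
          · rw [List.mem_singleton] at h
            rw [Sym2.eq_iff] at h
            rcases h with ⟨h1, h2⟩ | ⟨h1, h2⟩
            · exact hg.adj.ne h2
            · have hq'q : q = q' := by simpa using h2
              exact hne hq'q
        · rw [List.nodup_append]
          refine ⟨hP1path.isTrail.edges_nodup, List.nodup_singleton _, ?_⟩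
          intro e he e' he' hee'
          rw [List.mem_singleton] at he'
          subst he'
          subst hee'
          exact hrS (hP1S r (Walk.snd_mem_support_of_mem_edges P1 he))
      · -- ne nil
        rw [hC]; simp
      · -- support tail nodup
        erw [hC, Walk.support_cons, List.tail_cons, Walk.support_concat]
        erw [List.nodup_append]
        refine ⟨hP1path.support_nodup, List.nodup_singleton _, ?_⟩
        intro z hz z' hz' hzz'
        rw [List.mem_singleton] at hz'
        subst hz'
        subst hzz'
        exact hrP1 hz
    exact td.isTree.IsAcyclic C hcyc
  subst hqq'
  subst hrr'
  refine ⟨rfl, rfl, ?_⟩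
  have := hg.2.2.2.symm.trans hg'.2.2.2
  rwa [Finset.singleton_inj] at this

-- ## Stage C : the choice of gates and the recoloring function

variable (α : V → Fin k) (a : Fin k)

noncomputable def gTrip (x : V) (hx : x ∉ td.bag u) : Fin n × Fin n × V :=
  (show ∃ t : Fin n × Fin n × V, IsGate td u x t.1 t.2.1 t.2.2 by
    obtain ⟨p, hp⟩ := td.mem_bag x
    obtain ⟨q, r, y, hg, _⟩ := exists_gate td hcomp u hx hp
    exact ⟨(q, r, y), hg⟩).choose

noncomputable def gQ (x : V) (hx : x ∉ td.bag u) : Fin n := (gTrip td hcomp u x hx).1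
noncomputable def gR (x : V) (hx : x ∉ td.bag u) : Fin n := (gTrip td hcomp u x hx).2.1
noncomputable def gY (x : V) (hx : x ∉ td.bag u) : V := (gTrip td hcomp u x hx).2.2

lemma gate_spec (x : V) (hx : x ∉ td.bag u) :
    IsGate td u x (gQ td hcomp u x hx) (gR td hcomp u x hx) (gY td hcomp u x hx) :=
  (show ∃ t : Fin n × Fin n × V, IsGate td u x t.1 t.2.1 t.2.2 by
    obtain ⟨p, hp⟩ := td.mem_bag x
    obtain ⟨q, r, y, hg, _⟩ := exists_gate td hcomp u hx hp
    exact ⟨(q, r, y), hg⟩).choose_spec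

lemma gate_eq {x : V} {q r : Fin n} {y : V} (hx : x ∉ td.bag u)
    (hg : IsGate td u x q r y) :
    q = gQ td hcomp u x hx ∧ r = gR td hcomp u x hx ∧ y = gY td hcomp u x hx :=
  gate_unique td hcomp u hg (gate_spec td hcomp u x hx)

lemma gate_mem_path {x : V} (hx : x ∉ td.bag u) {p : Fin n} (hp : x ∈ td.bag p) :
    R td.isTree u p (gQ td hcomp u x hx) ∧ R td.isTree u p (gR td hcomp u x hx) := by
  obtain ⟨q', r', y', hg', hRq'⟩ := exists_gate td hcomp u hx hp
  obtain ⟨hq, hr, hy⟩ := gate_eq td hcomp u hx hg'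
  subst hq
  refine ⟨hRq', R_trans _ _ hRq' (gate_spec td hcomp u x hx).rootward⟩

/-- termination measure -/
noncomputable def nu (x : V) : ℕ :=
  if hx : x ∈ td.bag u then 0 else meas td.isTree u (gQ td hcomp u x hx) + 1

lemma nu_mem {x : V} (hx : x ∈ td.bag u) : nu td hcomp u x = 0 := dif_pos hx

lemma nu_not_mem {x : V} (hx : x ∉ td.bag u) :
    nu td hcomp u x = meas td.isTree u (gQ td hcomp u x hx) + 1 := dif_neg hx

lemma mem_of_nu_eq_zero {x : V} (h : nu td hcomp u x = 0) : x ∈ td.bag u := by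
  by_contra hx
  rw [nu_not_mem td hcomp u hx] at h
  omega

lemma nu_lt_of_mem_r {x : V} (hx : x ∉ td.bag u) {v : V}
    (hv : v ∈ td.bag (gR td hcomp u x hx)) : nu td hcomp u v < nu td hcomp u x := by
  rw [nu_not_mem td hcomp u hx]
  by_cases hvu : v ∈ td.bag u
  · rw [nu_mem td hcomp u hvu]; omega
  · rw [nu_not_mem td hcomp u hvu]
    have h1 : R td.isTree u (gR td hcomp u x hx) (gQ td hcomp u v hvu) :=
      (gate_mem_path td hcomp u hvu hv).1
    have h2 := meas_le_of_R td.isTree u h1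
    have h3 := meas_succ_of_R td.isTree u (gate_spec td hcomp u x hx).adj
      (gate_spec td hcomp u x hx).rootward
    omega

lemma nu_lt_y {x : V} (hx : x ∉ td.bag u) :
    nu td hcomp u (gY td hcomp u x hx) < nu td hcomp u x :=
  nu_lt_of_mem_r td hcomp u hx (gate_spec td hcomp u x hx).y_mem_r

lemma nu_lt_of_mem_erase {x : V} (hx : x ∉ td.bag u) {v : V}
    (hv : v ∈ (td.bag (gQ td hcomp u x hx)).erase x) :
    nu td hcomp u v < nu td hcomp u x := by
  refine nu_lt_of_mem_r td hcomp u hx ?_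
  exact (gate_spec td hcomp u x hx).mem_r_of_mem_q (Finset.mem_of_mem_erase hv)
    (Finset.ne_of_mem_erase hv)

/-- an arbitrary color outside `F` -/
noncomputable def fresh (F : Finset (Fin k)) : Fin k :=
  if h : (Finset.univ \ F).Nonempty then (Finset.univ \ F).min' h else a

lemma fresh_not_mem (hk : ℓ + 2 ≤ k) {F : Finset (Fin k)} (hF : F.card ≤ ℓ + 1) :
    fresh a F ∉ F := by
  have hne : (Finset.univ \ F).Nonempty := by
    rw [← Finset.card_pos, Finset.card_sdiff_of_subset (Finset.subset_univ F), Finset.card_univ,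
      Fintype.card_fin]
    omega
  have : fresh a F ∈ Finset.univ \ F := by
    unfold fresh
    rw [dif_pos hne]
    exact Finset.min'_mem _ _
  exact (Finset.mem_sdiff.1 this).2

noncomputable def betaN : ℕ → V → Fin k
  | 0 => α
  | (N+1) => fun x =>
    if hx : x ∈ td.bag u then α x
    else if gY td hcomp u x hx ∈ td.bag u then
      (if α x ∈ insert a (((td.bag (gQ td hcomp u x hx)).erase x).image (betaN N)) then
        fresh a (insert a (((td.bag (gQ td hcomp u x hx)).erase x).image (betaN N)))
      else α x)
    else betaN N (gY td hcomp u x hx)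

lemma betaN_mem {x : V} (hx : x ∈ td.bag u) (N : ℕ) : betaN td hcomp u α a N x = α x := by
  cases N with
  | zero => rfl
  | succ N => exact dif_pos hx

lemma betaN_stable : ∀ (m : ℕ) (x : V), nu td hcomp u x ≤ m → ∀ N N', nu td hcomp u x ≤ N →
    nu td hcomp u x ≤ N' → betaN td hcomp u α a N x = betaN td hcomp u α a N' x := by
  intro m
  induction m with
  | zero =>
    intro x hm N N' _ _
    have hx : x ∈ td.bag u := mem_of_nu_eq_zero td hcomp u (Nat.le_zero.1 hm)
    rw [betaN_mem td hcomp u α a hx, betaN_mem td hcomp u α a hx]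
  | succ m ih =>
    intro x hm N N' hN hN'
    by_cases hx : x ∈ td.bag u
    · rw [betaN_mem td hcomp u α a hx, betaN_mem td hcomp u α a hx]
    · have hnu : 1 ≤ nu td hcomp u x := by
        rw [nu_not_mem td hcomp u hx]; omega
      obtain ⟨N₁, rfl⟩ : ∃ N₁, N = N₁ + 1 := ⟨N - 1, by omega⟩
      obtain ⟨N₁', rfl⟩ : ∃ N₁', N' = N₁' + 1 := ⟨N' - 1, by omega⟩
      show betaN td hcomp u α a (N₁+1) x = betaN td hcomp u α a (N₁'+1) x
      simp only [betaN]
      rw [dif_neg hx, dif_neg hx]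
      have himg : ((td.bag (gQ td hcomp u x hx)).erase x).image (betaN td hcomp u α a N₁)
          = ((td.bag (gQ td hcomp u x hx)).erase x).image (betaN td hcomp u α a N₁') := by
        apply Finset.image_congr
        intro v hv
        have hvlt := nu_lt_of_mem_erase td hcomp u hx hv
        exact ih v (by omega) N₁ N₁' (by omega) (by omega)
      by_cases hy : gY td hcomp u x hx ∈ td.bag u
      · rw [if_pos hy, if_pos hy, himg]
      · rw [if_neg hy, if_neg hy]
        have hylt := nu_lt_y td hcomp u hx
        exact ih _ (by omega) N₁ N₁' (by omega) (by omega)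

/-- The recoloring. -/
noncomputable def beta (x : V) : Fin k := betaN td hcomp u α a (nu td hcomp u x) x

lemma beta_mem {x : V} (hx : x ∈ td.bag u) : beta td hcomp u α a x = α x :=
  betaN_mem td hcomp u α a hx _

/-- colors forbidden for `x` at its gate -/
noncomputable def Fx (x : V) (hx : x ∉ td.bag u) : Finset (Fin k) :=
  insert a (((td.bag (gQ td hcomp u x hx)).erase x).image (beta td hcomp u α a))

lemma betaN_unfold {x : V} (hx : x ∉ td.bag u) :
    beta td hcomp u α a x =
      if gY td hcomp u x hx ∈ td.bag u then
        (if α x ∈ Fx td hcomp u α a x hx then fresh a (Fx td hcomp u α a x hx)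
         else α x)
      else beta td hcomp u α a (gY td hcomp u x hx) := by
  set M := meas td.isTree u (gQ td hcomp u x hx) with hM
  have hnu : nu td hcomp u x = M + 1 := nu_not_mem td hcomp u hx
  have himg : ((td.bag (gQ td hcomp u x hx)).erase x).image (betaN td hcomp u α a M)
      = ((td.bag (gQ td hcomp u x hx)).erase x).image (beta td hcomp u α a) := by
    apply Finset.image_congr
    intro v hv
    have hvlt := nu_lt_of_mem_erase td hcomp u hx hv
    exact betaN_stable td hcomp u α a (nu td hcomp u v) v le_rfl M (nu td hcomp u v)
      (by omega) le_rfl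
  show betaN td hcomp u α a (nu td hcomp u x) x = _
  rw [hnu]
  simp only [betaN]
  rw [dif_neg hx]
  by_cases hy : gY td hcomp u x hx ∈ td.bag u
  · rw [if_pos hy, if_pos hy]
    unfold Fx
    rw [himg]
  · rw [if_neg hy, if_neg hy]
    have hylt := nu_lt_y td hcomp u hx
    exact betaN_stable td hcomp u α a (nu td hcomp u (gY td hcomp u x hx)) _ le_rfl M _
      (by omega) le_rfl

lemma beta_chain {x : V} (hx : x ∉ td.bag u) (hy : gY td hcomp u x hx ∉ td.bag u) :
    beta td hcomp u α a x = beta td hcomp u α a (gY td hcomp u x hx) := by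
  rw [betaN_unfold td hcomp u α a hx, if_neg hy]

lemma Fx_card {x : V} (hx : x ∉ td.bag u) : (Fx td hcomp u α a x hx).card ≤ ℓ + 1 := by
  unfold Fx
  refine le_trans (Finset.card_insert_le _ _) ?_
  have h1 := Finset.card_image_le (s := (td.bag (gQ td hcomp u x hx)).erase x)
    (f := beta td hcomp u α a)
  have h2 : ((td.bag (gQ td hcomp u x hx)).erase x).card = ℓ := by
    rw [Finset.card_erase_of_mem (gate_spec td hcomp u x hx).mem_q, hcomp.1]
    omega
  omega

lemma beta_top_notmem (hk : ℓ + 2 ≤ k) {x : V} (hx : x ∉ td.bag u)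
    (hy : gY td hcomp u x hx ∈ td.bag u) :
    beta td hcomp u α a x ∉ Fx td hcomp u α a x hx := by
  rw [betaN_unfold td hcomp u α a hx, if_pos hy]
  by_cases hmem : α x ∈ Fx td hcomp u α a x hx
  · rw [if_pos hmem]
    exact fresh_not_mem td hcomp a hk (Fx_card td hcomp u α a hx)
  · rw [if_neg hmem]
    exact hmem

lemma beta_top_changed {x : V} (hx : x ∉ td.bag u) (hy : gY td hcomp u x hx ∈ td.bag u)
    (hch : beta td hcomp u α a x ≠ α x) : α x ∈ Fx td hcomp u α a x hx := by
  by_contra hmem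
  rw [betaN_unfold td hcomp u α a hx, if_pos hy, if_neg hmem] at hch
  exact hch rfl


-- ## Stage D : main invariants

lemma node_parent (t : Fin n) (ht : t ≠ u) :
    ∃ (s : Fin n) (xt yt : V), IsGate td u xt t s yt ∧
      meas td.isTree u s + 1 = meas td.isTree u t := by
  obtain ⟨s, hadj, hRs, _⟩ := second_vertex td.isTree u ht
  have hdiff1 : (td.bag t \ td.bag s).card = 1 := by
    have h1 : td.bag t \ td.bag s = td.bag t \ (td.bag t ∩ td.bag s) := by
      rw [Finset.sdiff_inter_self_left]
    rw [h1, Finset.card_sdiff_of_subset Finset.inter_subset_left, hcomp.1 t, hcomp.2 hadj]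
    omega
  have hdiff2 : (td.bag s \ td.bag t).card = 1 := by
    have h1 : td.bag s \ td.bag t = td.bag s \ (td.bag s ∩ td.bag t) := by
      rw [Finset.sdiff_inter_self_left]
    rw [h1, Finset.card_sdiff_of_subset Finset.inter_subset_left, hcomp.1 s, Finset.inter_comm,
      hcomp.2 hadj]
    omega
  obtain ⟨xt, hxt⟩ := Finset.card_eq_one.1 hdiff1
  obtain ⟨yt, hyt⟩ := Finset.card_eq_one.1 hdiff2
  exact ⟨s, xt, yt, ⟨hadj, hRs, hxt, hyt⟩, (meas_succ_of_R td.isTree u hadj hRs).symm⟩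

variable (hcoh : td.Coherent {x : V | x ∉ td.bag u} α) (hk : ℓ + 2 ≤ k)

include hcoh hk

lemma main_inv : ∀ (m : ℕ) (t : Fin n), meas td.isTree u t ≤ m →
    (∀ x ∈ td.bag t, x ∉ td.bag u → (beta td hcomp u α a x ≠ a ∧
        ∀ y ∈ td.bag t, beta td hcomp u α a y = beta td hcomp u α a x → y = x)) ∧
    (∀ v ∈ td.bag t, v ∉ td.bag u → beta td hcomp u α a v ≠ α v →
        α v ∈ insert a (((td.bag t).erase v).image (beta td hcomp u α a))) := by
  intro m
  induction m with
  | zero =>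
    intro t hm
    have htu : t = u := eq_rt_of_meas_eq_zero _ _ (Nat.le_zero.1 hm)
    subst htu
    exact ⟨fun x hx hxu => absurd hx hxu, fun v hv hvu => absurd hv hvu⟩
  | succ m ih =>
    intro t hm
    rcases eq_or_ne t u with rfl | htu
    · exact ⟨fun x hx hxu => absurd hx hxu, fun v hv hvu => absurd hv hvu⟩
    obtain ⟨s, xt, yt, hg, hms⟩ := node_parent td hcomp u t htu
    have hs := ih s (by omega)
    have hxtu : xt ∉ td.bag u := hg.not_mem_rootbag
    obtain ⟨hq, hr, hy⟩ := gate_eq td hcomp u hxtu hg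
    have herase : (td.bag t).erase xt = (td.bag s).erase yt := hg.erase_eq
    -- the key bound for the introduced vertex
    have hbx : beta td hcomp u α a xt ∉
        insert a (((td.bag t).erase xt).image (beta td hcomp u α a)) := by
      by_cases hy' : yt ∈ td.bag u
      · have h0 := beta_top_notmem td hcomp u α a hk hxtu (hy ▸ hy')
        unfold Fx at h0
        rwa [← hq] at h0
      · have hbc : beta td hcomp u α a xt = beta td hcomp u α a yt := by
          have := beta_chain td hcomp u α a hxtu (hy ▸ hy')
          rwa [← hy] at this
        have hyprop := (hs.1 yt hg.y_mem_r hy')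
        intro hmem
        rcases Finset.mem_insert.1 hmem with hmem | hmem
        · exact hyprop.1 (hbc.symm.trans hmem)
        · obtain ⟨v, hv, hbv⟩ := Finset.mem_image.1 hmem
          rw [herase] at hv
          have := hyprop.2 v (Finset.mem_of_mem_erase hv) (hbv.trans hbc)
          exact (Finset.ne_of_mem_erase hv) this
    constructor
    · intro x hxt hxu
      constructor
      · rcases eq_or_ne x xt with rfl | hne
        · intro hax
          exact hbx (by rw [hax]; exact Finset.mem_insert_self a _)
        · exact (hs.1 x (hg.mem_r_of_mem_q hxt hne) hxu).1
      · intro y hyt hBeq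
        rcases eq_or_ne x xt with rfl | hne
        · by_contra hyx
          refine hbx (Finset.mem_insert_of_mem (Finset.mem_image.2 ⟨y, ?_, hBeq⟩))
          exact Finset.mem_erase.2 ⟨hyx, hyt⟩
        · have hxs : x ∈ td.bag s := hg.mem_r_of_mem_q hxt hne
          rcases eq_or_ne y xt with rfl | hyne
          · exfalso
            refine hbx (Finset.mem_insert_of_mem (Finset.mem_image.2 ⟨x, ?_, hBeq.symm⟩))
            exact Finset.mem_erase.2 ⟨hne, hxt⟩
          · exact (hs.1 x hxs hxu).2 y (hg.mem_r_of_mem_q hyt hyne) hBeq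
    · intro v hvt hvu hch
      rcases eq_or_ne v xt with rfl | hneq
      · by_cases hy' : yt ∈ td.bag u
        · have h0 := beta_top_changed td hcomp u α a hxtu (hy ▸ hy') hch
          unfold Fx at h0
          rwa [← hq] at h0
        · have hbc : beta td hcomp u α a v = beta td hcomp u α a yt := by
            have := beta_chain td hcomp u α a hxtu (hy ▸ hy')
            rwa [← hy] at this
          have hαeq : α v = α yt := by
            refine hcoh.1 (show v ∉ td.bag u from hvu) (show yt ∉ td.bag u from hy') ?_
            exact ⟨t, s, hg.adj, hg.2.2.1, hg.2.2.2⟩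
          have hychanged : beta td hcomp u α a yt ≠ α yt := by
            rw [← hbc, ← hαeq]; exact hch
          have h3 := hs.2 yt hg.y_mem_r hy' hychanged
          rw [← hαeq, ← herase] at h3
          exact h3
      · have hvs : v ∈ td.bag s := hg.mem_r_of_mem_q hvt hneq
        have h3 := hs.2 v hvs hvu hch
        rcases Finset.mem_insert.1 h3 with h4 | h4
        · rw [h4]; exact Finset.mem_insert_self a _
        obtain ⟨w, hw, hbw⟩ := Finset.mem_image.1 h4
        have hwv : w ≠ v := Finset.ne_of_mem_erase hw
        have hws : w ∈ td.bag s := Finset.mem_of_mem_erase hw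
        rcases eq_or_ne w yt with hwyt | hwyt
        · rw [hwyt] at hbw hws hwv
          by_cases hy' : yt ∈ td.bag u
          · exfalso
            have hbyt : beta td hcomp u α a yt = α yt := beta_mem td hcomp u α a hy'
            have heq : α yt = α v := by rw [← hbyt]; exact hbw
            have := hcoh.2 s v (show v ∉ td.bag u from hvu) hvs yt hws heq
            rw [← this] at hvu
            exact hvu hy'
          · have hbc : beta td hcomp u α a xt = beta td hcomp u α a yt := by
              have := beta_chain td hcomp u α a hxtu (hy ▸ hy')
              rwa [← hy] at this
            refine Finset.mem_insert_of_mem (Finset.mem_image.2 ⟨xt, ?_, ?_⟩)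
            · exact Finset.mem_erase.2 ⟨Ne.symm hneq, hg.mem_q⟩
            · rw [hbc, hbw]
        · refine Finset.mem_insert_of_mem (Finset.mem_image.2 ⟨w, ?_, hbw⟩)
          exact Finset.mem_erase.2 ⟨hwv, hg.mem_q_of_mem_r hws hwyt⟩


-- ## Stage E : chain tops and the ordering lemmas

omit hcoh hk

noncomputable def topN : ℕ → V → V
  | 0 => fun x => x
  | (N+1) => fun x =>
    if hx : x ∈ td.bag u then x
    else if gY td hcomp u x hx ∈ td.bag u then x
    else topN N (gY td hcomp u x hx)

lemma topN_mem {x : V} (hx : x ∈ td.bag u) : ∀ N, topN td hcomp u N x = x := by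
  intro N
  cases N with
  | zero => rfl
  | succ N => exact dif_pos hx

lemma topN_stable : ∀ (m : ℕ) (x : V), nu td hcomp u x ≤ m → ∀ N N', nu td hcomp u x ≤ N →
    nu td hcomp u x ≤ N' → topN td hcomp u N x = topN td hcomp u N' x := by
  intro m
  induction m with
  | zero =>
    intro x hm N N' _ _
    have hx : x ∈ td.bag u := mem_of_nu_eq_zero td hcomp u (Nat.le_zero.1 hm)
    rw [topN_mem td hcomp u hx, topN_mem td hcomp u hx]
  | succ m ih =>
    intro x hm N N' hN hN'
    by_cases hx : x ∈ td.bag u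
    · rw [topN_mem td hcomp u hx, topN_mem td hcomp u hx]
    · have hnu : 1 ≤ nu td hcomp u x := by rw [nu_not_mem td hcomp u hx]; omega
      obtain ⟨N₁, rfl⟩ : ∃ N₁, N = N₁ + 1 := ⟨N - 1, by omega⟩
      obtain ⟨N₁', rfl⟩ : ∃ N₁', N' = N₁' + 1 := ⟨N' - 1, by omega⟩
      show topN td hcomp u (N₁+1) x = topN td hcomp u (N₁'+1) x
      simp only [topN]
      rw [dif_neg hx, dif_neg hx]
      by_cases hy : gY td hcomp u x hx ∈ td.bag u
      · rw [if_pos hy, if_pos hy]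
      · rw [if_neg hy, if_neg hy]
        have hylt := nu_lt_y td hcomp u hx
        exact ih _ (by omega) N₁ N₁' (by omega) (by omega)

noncomputable def topX (x : V) : V := topN td hcomp u (nu td hcomp u x) x

lemma topX_unfold {x : V} (hx : x ∉ td.bag u) :
    topX td hcomp u x = if gY td hcomp u x hx ∈ td.bag u then x
      else topX td hcomp u (gY td hcomp u x hx) := by
  have hnu : nu td hcomp u x = meas td.isTree u (gQ td hcomp u x hx) + 1 :=
    nu_not_mem td hcomp u hx
  show topN td hcomp u (nu td hcomp u x) x = _
  rw [hnu]
  simp only [topN]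
  rw [dif_neg hx]
  by_cases hy : gY td hcomp u x hx ∈ td.bag u
  · rw [if_pos hy, if_pos hy]
  · rw [if_neg hy, if_neg hy]
    have hylt := nu_lt_y td hcomp u hx
    exact topN_stable td hcomp u _ _ le_rfl _ _ (by omega) le_rfl

lemma gQ_congr {z z' : V} (h : z = z') (hz : z ∉ td.bag u) (hz' : z' ∉ td.bag u) :
    gQ td hcomp u z hz = gQ td hcomp u z' hz' := by subst h; rfl

lemma gR_congr {z z' : V} (h : z = z') (hz : z ∉ td.bag u) (hz' : z' ∉ td.bag u) :
    gR td hcomp u z hz = gR td hcomp u z' hz' := by subst h; rfl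

lemma gY_congr {z z' : V} (h : z = z') (hz : z ∉ td.bag u) (hz' : z' ∉ td.bag u) :
    gY td hcomp u z hz = gY td hcomp u z' hz' := by subst h; rfl

lemma topX_props : ∀ (m : ℕ) (x : V) (hx : x ∉ td.bag u), nu td hcomp u x ≤ m →
    ∃ (h1 : topX td hcomp u x ∉ td.bag u),
      gY td hcomp u (topX td hcomp u x) h1 ∈ td.bag u ∧
      beta td hcomp u α a (topX td hcomp u x) = beta td hcomp u α a x ∧
      R td.isTree u (gQ td hcomp u x hx) (gQ td hcomp u (topX td hcomp u x) h1) := by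
  intro m
  induction m with
  | zero =>
    intro x hx hm
    exact absurd (mem_of_nu_eq_zero td hcomp u (Nat.le_zero.1 hm)) hx
  | succ m ih =>
    intro x hx hm
    by_cases hy : gY td hcomp u x hx ∈ td.bag u
    · have htop : topX td hcomp u x = x := by rw [topX_unfold td hcomp u hx, if_pos hy]
      have hne : topX td hcomp u x ∉ td.bag u := by rw [htop]; exact hx
      refine ⟨hne, ?_, ?_, ?_⟩
      · rw [gY_congr td hcomp u htop hne hx]
        exact hy
      · rw [htop]
      · rw [gQ_congr td hcomp u htop hne hx]
        exact R_self _ _ _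
    · have htop : topX td hcomp u x = topX td hcomp u (gY td hcomp u x hx) := by
        rw [topX_unfold td hcomp u hx, if_neg hy]
      have hylt := nu_lt_y td hcomp u hx
      obtain ⟨h1, h2, h3, h4⟩ := ih (gY td hcomp u x hx) hy (by omega)
      have hne : topX td hcomp u x ∉ td.bag u := by rw [htop]; exact h1
      refine ⟨hne, ?_, ?_, ?_⟩
      · rw [gY_congr td hcomp u htop hne h1]
        exact h2
      · rw [show beta td hcomp u α a (topX td hcomp u x)
            = beta td hcomp u α a (topX td hcomp u (gY td hcomp u x hx)) by rw [htop]]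
        rw [h3]
        exact (beta_chain td hcomp u α a hx hy).symm
      · rw [gQ_congr td hcomp u htop hne h1]
        have hRqr : R td.isTree u (gQ td hcomp u x hx) (gR td hcomp u x hx) :=
          (gate_spec td hcomp u x hx).rootward
        have hRy : R td.isTree u (gR td hcomp u x hx) (gQ td hcomp u (gY td hcomp u x hx) hy) :=
          (gate_mem_path td hcomp u hy (gate_spec td hcomp u x hx).y_mem_r).1
        exact R_trans _ _ (R_trans _ _ hRqr hRy) h4

include α a

lemma topX_not_mem {x : V} (hx : x ∉ td.bag u) : topX td hcomp u x ∉ td.bag u :=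
  (topX_props td hcomp u α a _ x hx le_rfl).choose

lemma topX_gY_mem {x : V} (hx : x ∉ td.bag u) (h1 : topX td hcomp u x ∉ td.bag u) :
    gY td hcomp u (topX td hcomp u x) h1 ∈ td.bag u := by
  obtain ⟨h1', h2, _, _⟩ := topX_props td hcomp u α a _ x hx le_rfl
  exact h2

lemma topX_beta {x : V} (hx : x ∉ td.bag u) :
    beta td hcomp u α a (topX td hcomp u x) = beta td hcomp u α a x := by
  obtain ⟨h1', _, h3, _⟩ := topX_props td hcomp u α a _ x hx le_rfl
  exact h3

lemma topX_R {x : V} (hx : x ∉ td.bag u) (h1 : topX td hcomp u x ∉ td.bag u) :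
    R td.isTree u (gQ td hcomp u x hx) (gQ td hcomp u (topX td hcomp u x) h1) := by
  obtain ⟨h1', _, _, h4⟩ := topX_props td hcomp u α a _ x hx le_rfl
  rwa [gQ_congr td hcomp u rfl h1' h1] at h4

include hcoh

lemma topX_alpha : ∀ (m : ℕ) (x : V) (hx : x ∉ td.bag u), nu td hcomp u x ≤ m →
    α (topX td hcomp u x) = α x := by
  intro m
  induction m with
  | zero =>
    intro x hx hm
    exact absurd (mem_of_nu_eq_zero td hcomp u (Nat.le_zero.1 hm)) hx
  | succ m ih =>
    intro x hx hm
    by_cases hy : gY td hcomp u x hx ∈ td.bag u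
    · rw [show topX td hcomp u x = x by rw [topX_unfold td hcomp u hx, if_pos hy]]
    · have htop : topX td hcomp u x = topX td hcomp u (gY td hcomp u x hx) := by
        rw [topX_unfold td hcomp u hx, if_neg hy]
      have hylt := nu_lt_y td hcomp u hx
      rw [htop, ih (gY td hcomp u x hx) hy (by omega)]
      refine hcoh.1 (show gY td hcomp u x hx ∉ td.bag u from hy)
        (show x ∉ td.bag u from hx) ?_
      obtain ⟨hadj, _, hd1, hd2⟩ := gate_spec td hcomp u x hx
      exact ⟨gR td hcomp u x hx, gQ td hcomp u x hx, hadj.symm, hd2, hd1⟩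

/-- chain covering: some element of the chain of `x` lies in every bag on the root
path between the gate of `x` and the gate of its top. -/
lemma chain_cover : ∀ (m : ℕ) (x : V) (hx : x ∉ td.bag u), nu td hcomp u x ≤ m →
    ∀ tb : Fin n, x ∈ td.bag tb → ∀ s : Fin n, R td.isTree u tb s →
    (∀ (h1 : topX td hcomp u x ∉ td.bag u),
      meas td.isTree u (gQ td hcomp u (topX td hcomp u x) h1) ≤ meas td.isTree u s) →
    ∃ v, v ∉ td.bag u ∧ v ∈ td.bag s ∧ α v = α x ∧
      beta td hcomp u α a v = beta td hcomp u α a x := by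
  intro m
  induction m with
  | zero =>
    intro x hx hm
    exact absurd (mem_of_nu_eq_zero td hcomp u (Nat.le_zero.1 hm)) hx
  | succ m ih =>
    intro x hx hm tb htb s hRs hmeas
    by_cases hxs : x ∈ td.bag s
    · exact ⟨x, hx, hxs, rfl, rfl⟩
    · have hall : R td.isTree u (gQ td hcomp u x hx) s :=
        SEP td.isTree u (td.support_connected x) (p := tb) htb hxs hRs
          ((gate_spec td hcomp u x hx).mem_q)
      have hsq : s ≠ gQ td hcomp u x hx := fun h => hxs (h ▸ (gate_spec td hcomp u x hx).mem_q)
      have hlt : meas td.isTree u s < meas td.isTree u (gQ td hcomp u x hx) :=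
        meas_lt_of_R _ _ hall hsq
      by_cases hy : gY td hcomp u x hx ∈ td.bag u
      · exfalso
        have htop : topX td hcomp u x = x := by rw [topX_unfold td hcomp u hx, if_pos hy]
        have h1 : topX td hcomp u x ∉ td.bag u := by rw [htop]; exact hx
        have := hmeas h1
        rw [gQ_congr td hcomp u htop h1 hx] at this
        omega
      · have hRrs : R td.isTree u (gR td hcomp u x hx) s := by
          have hcons := path_cons_of_R td.isTree u (gate_spec td hcomp u x hx).adj
            (gate_spec td hcomp u x hx).rootward
          have : s ∈ (thePath td.isTree (gQ td hcomp u x hx) u).support := hall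
          rw [hcons, Walk.support_cons] at this
          rcases List.mem_cons.1 this with h | h
          · exact absurd h hsq
          · exact h
        have htop : topX td hcomp u x = topX td hcomp u (gY td hcomp u x hx) := by
          rw [topX_unfold td hcomp u hx, if_neg hy]
        have hylt := nu_lt_y td hcomp u hx
        obtain ⟨v, hv1, hv2, hv3, hv4⟩ := ih (gY td hcomp u x hx) hy (by omega)
          (gR td hcomp u x hx) (gate_spec td hcomp u x hx).y_mem_r s hRrs
          (by
            intro h1
            have h1' : topX td hcomp u x ∉ td.bag u := htop ▸ h1
            have := hmeas h1'
            rwa [gQ_congr td hcomp u htop h1' h1] at this)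
        refine ⟨v, hv1, hv2, ?_, ?_⟩
        · rw [hv3]
          refine hcoh.1 (show gY td hcomp u x hx ∉ td.bag u from hy)
            (show x ∉ td.bag u from hx) ?_
          obtain ⟨hadj, _, hd1, hd2⟩ := gate_spec td hcomp u x hx
          exact ⟨gR td hcomp u x hx, gQ td hcomp u x hx, hadj.symm, hd2, hd1⟩
        · rw [hv4]
          exact (beta_chain td hcomp u α a hx hy).symm

include hk

/-- safe direction: if the top gate of `w` is strictly closer to the root than that
of `x`, then recoloring `x` cannot conflict with the old color of `w`. -/
lemma safe_dir {x w : V} (hx : x ∉ td.bag u) (hw : w ∉ td.bag u) {tb : Fin n}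
    (hxtb : x ∈ td.bag tb) (hwtb : w ∈ td.bag tb) (hαne : α x ≠ α w)
    (hwch : beta td hcomp u α a w ≠ α w)
    (hxstar : topX td hcomp u x ∉ td.bag u) (hwstar : topX td hcomp u w ∉ td.bag u)
    (hkey : meas td.isTree u (gQ td hcomp u (topX td hcomp u w) hwstar) <
      meas td.isTree u (gQ td hcomp u (topX td hcomp u x) hxstar)) :
    beta td hcomp u α a x ≠ α w := by
  intro hcon
  have hgx : IsGate td u (topX td hcomp u x) (gQ td hcomp u (topX td hcomp u x) hxstar)
      (gR td hcomp u (topX td hcomp u x) hxstar) (gY td hcomp u (topX td hcomp u x) hxstar) :=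
    gate_spec td hcomp u (topX td hcomp u x) hxstar
  have hzmem : gY td hcomp u (topX td hcomp u x) hxstar ∈ td.bag u :=
    topX_gY_mem td hcomp u α a hx hxstar
  have hRtb : R td.isTree u tb (gQ td hcomp u (topX td hcomp u x) hxstar) := by
    have h1 : R td.isTree u tb (gQ td hcomp u x hx) := (gate_mem_path td hcomp u hx hxtb).1
    exact R_trans _ _ h1 (topX_R td hcomp u α a hx hxstar)
  obtain ⟨v, hv1, hv2, hv3, hv4⟩ := chain_cover td hcomp u α a hcoh (nu td hcomp u w) w hw
    le_rfl tb hwtb (gQ td hcomp u (topX td hcomp u x) hxstar) hRtb (fun h1 => by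
      rw [gQ_congr td hcomp u rfl h1 hwstar]
      omega)
  have hvne : v ≠ topX td hcomp u x := by
    intro h
    rw [h, topX_alpha td hcomp u α a hcoh (nu td hcomp u x) x hx le_rfl] at hv3
    exact hαne hv3
  have hvr : v ∈ td.bag (gR td hcomp u (topX td hcomp u x) hxstar) :=
    hgx.mem_r_of_mem_q hv2 hvne
  have hvch : beta td hcomp u α a v ≠ α v := by
    rw [hv4, hv3]
    exact hwch
  have hinv3 := (main_inv td hcomp u α a hcoh hk
    (meas td.isTree u (gR td hcomp u (topX td hcomp u x) hxstar))
    (gR td hcomp u (topX td hcomp u x) hxstar) le_rfl).2 v hvr hv1 hvch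
  have hnot := beta_top_notmem td hcomp u α a hk hxstar hzmem
  have hbxs : beta td hcomp u α a (topX td hcomp u x) = α v := by
    rw [topX_beta td hcomp u α a hx, hv3]
    exact hcon
  rcases Finset.mem_insert.1 hinv3 with h4 | h4
  · rw [h4] at hbxs
    exact hnot (by rw [hbxs]; exact Finset.mem_insert_self a _)
  · obtain ⟨w', hw', hbw'⟩ := Finset.mem_image.1 h4
    have hw'ne : w' ≠ v := Finset.ne_of_mem_erase hw'
    have hw'r : w' ∈ td.bag (gR td hcomp u (topX td hcomp u x) hxstar) :=
      Finset.mem_of_mem_erase hw'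
    by_cases hw'z : w' = gY td hcomp u (topX td hcomp u x) hxstar
    · have hbz : beta td hcomp u α a w' = α w' := beta_mem td hcomp u α a (hw'z ▸ hzmem)
      have heq : α w' = α v := by rw [← hbz]; exact hbw'
      have hvz := hcoh.2 (gR td hcomp u (topX td hcomp u x) hxstar) v
        (show v ∉ td.bag u from hv1) hvr w' hw'r heq
      rw [← hvz] at hv1
      exact hv1 (hw'z ▸ hzmem)
    · have hw'q : w' ∈ td.bag (gQ td hcomp u (topX td hcomp u x) hxstar) :=
        hgx.mem_q_of_mem_r hw'r hw'z
      have hw'xs : w' ≠ topX td hcomp u x := by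
        intro h
        rw [h] at hw'r
        exact hgx.not_mem_r hw'r
      refine hnot ?_
      unfold Fx
      refine Finset.mem_insert_of_mem (Finset.mem_image.2 ⟨w', ?_, ?_⟩)
      · exact Finset.mem_erase.2 ⟨hw'xs, hw'q⟩
      · rw [hbw']
        exact hbxs.symm

omit hk

/-- distinct top-gate measures for vertices sharing a bag with distinct colors -/
lemma key_ne {x w : V} (hx : x ∉ td.bag u) (hw : w ∉ td.bag u) {tb : Fin n}
    (hxtb : x ∈ td.bag tb) (hwtb : w ∈ td.bag tb) (hαne : α x ≠ α w)
    (hxstar : topX td hcomp u x ∉ td.bag u) (hwstar : topX td hcomp u w ∉ td.bag u) :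
    meas td.isTree u (gQ td hcomp u (topX td hcomp u x) hxstar) ≠
      meas td.isTree u (gQ td hcomp u (topX td hcomp u w) hwstar) := by
  intro hmeq
  have hRx : R td.isTree u tb (gQ td hcomp u (topX td hcomp u x) hxstar) :=
    R_trans _ _ (gate_mem_path td hcomp u hx hxtb).1 (topX_R td hcomp u α a hx hxstar)
  have hRw : R td.isTree u tb (gQ td hcomp u (topX td hcomp u w) hwstar) :=
    R_trans _ _ (gate_mem_path td hcomp u hw hwtb).1 (topX_R td hcomp u α a hw hwstar)
  have hqeq := R_inj td.isTree u hRx hRw hmeq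
  have hgx := gate_spec td hcomp u (topX td hcomp u x) hxstar
  have hgw := gate_spec td hcomp u (topX td hcomp u w) hwstar
  rw [← hqeq] at hgw
  have hreq : gR td hcomp u (topX td hcomp u x) hxstar = gR td hcomp u (topX td hcomp u w) hwstar :=
    rootward_unique td.isTree u hgx.adj hgx.rootward hgw.adj hgw.rootward
  rw [← hreq] at hgw
  have hsing := hgx.2.2.1.symm.trans hgw.2.2.1
  rw [Finset.singleton_inj] at hsing
  have hαx := topX_alpha td hcomp u α a hcoh (nu td hcomp u x) x hx le_rfl
  have hαw := topX_alpha td hcomp u α a hcoh (nu td hcomp u w) w hw le_rfl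
  exact hαne (by rw [← hαx, hsing, hαw])


-- ## Stage F : the recoloring sequence

omit hcoh

lemma R_edge_or {p1 p2 : Fin n} (hadj : td.T.Adj p1 p2) :
    R td.isTree u p1 p2 ∨ R td.isTree u p2 p1 := by
  by_cases hR : R td.isTree u p1 p2
  · exact Or.inl hR
  · right
    have : (Walk.cons hadj.symm (thePath td.isTree p1 u)).IsPath :=
      (Walk.cons_isPath_iff _ _).2 ⟨thePath_isPath td.isTree p1 u, hR⟩
    have huniq := thePath_unique td.isTree _ this
    unfold R
    rw [← huniq, Walk.support_cons]
    exact List.mem_cons_of_mem _ (Walk.start_mem_support _)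

/-- the ordering key: distance to root of the top gate -/
noncomputable def keyF (v : V) : ℕ :=
  if h1 : topX td hcomp u v ∉ td.bag u then
    meas td.isTree u (gQ td hcomp u (topX td hcomp u v) h1)
  else 0

lemma keyF_not_mem {v : V} (hv : v ∉ td.bag u) :
    keyF td hcomp u v = meas td.isTree u (gQ td hcomp u (topX td hcomp u v)
      (topX_not_mem td hcomp u α a hv)) :=
  dif_pos (topX_not_mem td hcomp u α a hv)

/-- all vertices -/
def CF : Finset V := Finset.univ.biUnion (fun t : Fin n => td.bag t)

omit hcomp α a in
lemma mem_CF (v : V) : v ∈ CF td := by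
  obtain ⟨t, ht⟩ := td.mem_bag v
  exact Finset.mem_biUnion.2 ⟨t, Finset.mem_univ t, ht⟩

noncomputable def Changed : Finset V :=
  (CF td).filter (fun v => beta td hcomp u α a v ≠ α v)

lemma changed_iff (v : V) : v ∈ Changed td hcomp u α a ↔ beta td hcomp u α a v ≠ α v := by
  unfold Changed
  rw [Finset.mem_filter]
  exact ⟨fun h => h.2, fun h => ⟨mem_CF td v, h⟩⟩

lemma changed_not_mem_rootbag {v : V} (hv : v ∈ Changed td hcomp u α a) : v ∉ td.bag u := by
  intro hmem
  exact ((changed_iff td hcomp u α a v).1 hv) (beta_mem td hcomp u α a hmem)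

/-- intermediate colorings -/
noncomputable def gam (S : Finset V) : V → Fin k :=
  fun v => if v ∈ S then beta td hcomp u α a v else α v

omit hcoh hk in
lemma gam_apply (S : Finset V) (v : V) :
    gam td hcomp u α a S v = if v ∈ S then beta td hcomp u α a v else α v := rfl

/-- downward closed sets of changed vertices -/
def DC (S : Finset V) : Prop :=
  S ⊆ Changed td hcomp u α a ∧
  ∀ w ∈ Changed td hcomp u α a, ∀ v ∈ S,
    keyF td hcomp u v < keyF td hcomp u w → w ∈ S

variable (hα : Proper G α)

include hcoh hk hα

lemma gam_proper {S : Finset V} (hDC : DC td hcomp u α a S) : Proper G (gam td hcomp u α a S) := by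
  obtain ⟨hDC1, hDC2⟩ := hDC
  intro p q hadj
  obtain ⟨tb, hptb, hqtb⟩ := td.edge_bag hadj
  have hbb : ∀ p' q' : V, p' ∈ S → q' ∈ td.bag tb → p' ∈ td.bag tb → p' ≠ q' →
      beta td hcomp u α a p' ≠ beta td hcomp u α a q' := by
    intro p' q' hp' hq' hp'tb hne hEq
    have hp'u : p' ∉ td.bag u := changed_not_mem_rootbag td hcomp u α a (hDC1 hp')
    exact hne (((main_inv td hcomp u α a hcoh hk (meas td.isTree u tb) tb le_rfl).1
      p' hp'tb hp'u).2 q' hq' hEq.symm).symm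
  have hmix : ∀ p' q' : V, G.Adj p' q' → p' ∈ td.bag tb → q' ∈ td.bag tb →
      p' ∈ S → q' ∉ S → beta td hcomp u α a p' ≠ α q' := by
    intro p' q' hadj' hp'tb hq'tb hp'S hq'S
    by_cases hq'C : q' ∈ Changed td hcomp u α a
    · -- q' is changed but scheduled later
      have hp'u : p' ∉ td.bag u := changed_not_mem_rootbag td hcomp u α a (hDC1 hp'S)
      have hq'u : q' ∉ td.bag u := changed_not_mem_rootbag td hcomp u α a hq'C
      have hαne : α p' ≠ α q' := hα hadj'
      have hkle : ¬ (keyF td hcomp u p' < keyF td hcomp u q') := by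
        intro hlt
        exact hq'S (hDC2 q' hq'C p' hp'S hlt)
      have hkne : keyF td hcomp u p' ≠ keyF td hcomp u q' := by
        rw [keyF_not_mem td hcomp u α a hp'u, keyF_not_mem td hcomp u α a hq'u]
        exact key_ne td hcomp u α a hcoh hp'u hq'u hp'tb hq'tb hαne _ _
      have hklt : keyF td hcomp u q' < keyF td hcomp u p' := by omega
      rw [keyF_not_mem td hcomp u α a hp'u, keyF_not_mem td hcomp u α a hq'u] at hklt
      exact safe_dir td hcomp u α a hcoh hk hp'u hq'u hp'tb hq'tb hαne
        ((changed_iff td hcomp u α a q').1 hq'C) _ _ hklt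
    · -- q' is not changed at all
      have hq'eq : beta td hcomp u α a q' = α q' := by
        by_contra hne
        exact hq'C ((changed_iff td hcomp u α a q').2 hne)
      rw [← hq'eq]
      exact hbb p' q' hp'S hq'tb hp'tb hadj'.ne
  unfold gam
  by_cases hpS : p ∈ S <;> by_cases hqS : q ∈ S
  · rw [if_pos hpS, if_pos hqS]
    exact hbb p q hpS hqtb hptb hadj.ne
  · rw [if_pos hpS, if_neg hqS]
    exact hmix p q hadj hptb hqtb hpS hqS
  · rw [if_neg hpS, if_pos hqS]
    exact fun h => (hmix q p hadj.symm hqtb hptb hqS hpS) h.symm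
  · rw [if_neg hpS, if_neg hqS]
    exact hα hadj

lemma seq_aux : ∀ (N : ℕ) (S : Finset V), S.card = N → DC td hcomp u α a S →
    RecolorSeqLe G α (gam td hcomp u α a S) (fun v => if v ∈ S then 1 else 0) := by
  intro N
  induction N with
  | zero =>
    intro S hcard hDC
    have hS : S = ∅ := Finset.card_eq_zero.1 hcard
    subst hS
    refine ⟨0, fun _ => α, rfl, ?_, ?_, ?_, ?_⟩
    · funext v
      unfold gam
      rw [if_neg (Finset.notMem_empty v)]
    · intro i _
      exact hα
    · intro i hi
      omega
    · intro v
      simp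
  | succ N ih =>
    intro S hcard hDC
    have hSne : S.Nonempty := Finset.card_pos.1 (by omega)
    obtain ⟨v₀, hv₀S, hv₀min⟩ := S.exists_min_image (keyF td hcomp u) hSne
    obtain ⟨hDC1, hDC2⟩ := hDC
    have hS'card : (S.erase v₀).card = N := by
      rw [Finset.card_erase_of_mem hv₀S, hcard]
      omega
    have hS'DC : DC td hcomp u α a (S.erase v₀) := by
      constructor
      · exact (Finset.erase_subset _ _).trans hDC1
      · intro w hw v hv hkey
        have hvS : v ∈ S := Finset.mem_of_mem_erase hv
        have hwS : w ∈ S := hDC2 w hw v hvS hkey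
        have hwv₀ : w ≠ v₀ := by
          intro h
          have := hv₀min v hvS
          rw [← h] at this
          omega
        exact Finset.mem_erase.2 ⟨hwv₀, hwS⟩
    obtain ⟨m, c, hc0, hcm, hprop, hstep, hcount⟩ := ih (S.erase v₀) hS'card hS'DC
    refine ⟨m + 1, fun i => if i ≤ m then c i else gam td hcomp u α a S, ?_, ?_, ?_, ?_, ?_⟩
    · show (if 0 ≤ m then c 0 else gam td hcomp u α a S) = α
      rw [if_pos (Nat.zero_le m)]
      exact hc0
    · show (if m + 1 ≤ m then c (m+1) else gam td hcomp u α a S) = gam td hcomp u α a S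
      rw [if_neg (by omega)]
    · intro i hi
      show Proper G (if i ≤ m then c i else gam td hcomp u α a S)
      by_cases him : i ≤ m
      · rw [if_pos him]
        exact hprop i him
      · rw [if_neg him]
        exact gam_proper td hcomp u α a hcoh hk hα ⟨hDC1, hDC2⟩
    · intro i hi
      show ∃! v, (if i ≤ m then c i else gam td hcomp u α a S) v ≠
        (if i + 1 ≤ m then c (i+1) else gam td hcomp u α a S) v
      by_cases him : i < m
      · rw [if_pos (by omega : i ≤ m), if_pos (by omega : i + 1 ≤ m)]
        exact hstep i him
      · have hieq : i = m := by omega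
        subst hieq
        rw [if_pos le_rfl, if_neg (by omega), hcm]
        have hv₀Ch : beta td hcomp u α a v₀ ≠ α v₀ :=
          (changed_iff td hcomp u α a v₀).1 (hDC1 hv₀S)
        refine ⟨v₀, ?_, ?_⟩
        · show gam td hcomp u α a (S.erase v₀) v₀ ≠ gam td hcomp u α a S v₀
          rw [gam_apply, gam_apply, if_neg (Finset.notMem_erase v₀ S), if_pos hv₀S]
          exact fun h => hv₀Ch h.symm
        · intro w hw
          by_contra hwv₀
          apply hw
          show gam td hcomp u α a (S.erase v₀) w = gam td hcomp u α a S w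
          rw [gam_apply, gam_apply]
          have hiff : w ∈ S.erase v₀ ↔ w ∈ S := by
            rw [Finset.mem_erase]
            exact ⟨fun h => h.2, fun h => ⟨hwv₀, h⟩⟩
          by_cases hwS : w ∈ S
          · rw [if_pos (hiff.2 hwS), if_pos hwS]
          · rw [if_neg (fun h => hwS (hiff.1 h)), if_neg hwS]
    · intro v
      show ((Finset.range (m + 1)).filter
          (fun i => (if i ≤ m then c i else gam td hcomp u α a S) v ≠
            (if i + 1 ≤ m then c (i+1) else gam td hcomp u α a S) v)).card ≤
        if v ∈ S then 1 else 0
      have hfeq : (Finset.range m).filter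
            (fun i => (if i ≤ m then c i else gam td hcomp u α a S) v ≠
              (if i + 1 ≤ m then c (i+1) else gam td hcomp u α a S) v)
          = (Finset.range m).filter (fun i => c i v ≠ c (i+1) v) := by
        apply Finset.filter_congr
        intro i hi
        have him : i < m := Finset.mem_range.1 hi
        rw [if_pos (by omega : i ≤ m), if_pos (by omega : i + 1 ≤ m)]
      rw [Finset.range_add_one, Finset.filter_insert]
      have hold := hcount v
      simp only at hold
      by_cases hlast : (if m ≤ m then c m else gam td hcomp u α a S) v ≠
          (if m + 1 ≤ m then c (m+1) else gam td hcomp u α a S) v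
      · rw [if_pos hlast]
        have hvv₀ : v = v₀ := by
          by_contra hvv₀
          apply hlast
          rw [if_pos le_rfl, if_neg (by omega), hcm, gam_apply, gam_apply]
          have hiff : v ∈ S.erase v₀ ↔ v ∈ S := by
            rw [Finset.mem_erase]
            exact ⟨fun h => h.2, fun h => ⟨hvv₀, h⟩⟩
          by_cases hvS : v ∈ S
          · rw [if_pos (hiff.2 hvS), if_pos hvS]
          · rw [if_neg (fun h => hvS (hiff.1 h)), if_neg hvS]
        subst hvv₀
        have hnotS' : v ∉ S.erase v := by
          rw [Finset.mem_erase]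
          exact fun h => h.1 rfl
        have hcount0 : ((Finset.range m).filter (fun i => c i v ≠ c (i+1) v)).card = 0 := by
          rw [if_neg hnotS'] at hold
          omega
        rw [Finset.card_insert_of_notMem (by
          rw [hfeq]
          intro hmem
          have := Finset.mem_range.1 (Finset.mem_of_mem_filter _ hmem)
          omega), hfeq, hcount0, if_pos hv₀S]
      · rw [if_neg hlast, hfeq]
        refine le_trans hold ?_
        by_cases hvS' : v ∈ S.erase v₀
        · rw [if_pos hvS', if_pos (Finset.mem_of_mem_erase hvS')]
        · rw [if_neg hvS']
          omega

lemma final (ha : ∀ x ∈ td.bag u, α x ≠ a) :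
    ∃ β : V → Fin k, td.Coherent {x : V | x ∉ td.bag u} β ∧ (∀ x, β x ≠ a) ∧
      RecolorSeqLe G α β (fun x => if x ∈ td.bag u then 0 else 1) := by
  refine ⟨beta td hcomp u α a, ⟨?_, ?_⟩, ?_, ?_⟩
  · -- coherence, part 1
    intro x y hx hy hp
    obtain ⟨p1, p2, hadj, hd1, hd2⟩ := hp
    rcases R_edge_or td hcomp u α a hadj with hR | hR
    · have hg : IsGate td u x p1 p2 y := ⟨hadj, hR, hd1, hd2⟩
      obtain ⟨hq, hr, hyy⟩ := gate_eq td hcomp u (show x ∉ td.bag u from hx) hg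
      have hb := beta_chain td hcomp u α a (show x ∉ td.bag u from hx)
        (by rw [← hyy]; exact hy)
      rw [← hyy] at hb
      exact hb
    · have hg : IsGate td u y p2 p1 x := ⟨hadj.symm, hR, hd2, hd1⟩
      obtain ⟨hq, hr, hyy⟩ := gate_eq td hcomp u (show y ∉ td.bag u from hy) hg
      have hb := beta_chain td hcomp u α a (show y ∉ td.bag u from hy)
        (by rw [← hyy]; exact hx)
      rw [← hyy] at hb
      exact hb.symm
  · -- coherence, part 2
    intro t x hx hxt y hyt hEq
    exact ((main_inv td hcomp u α a hcoh hk (meas td.isTree u t) t le_rfl).1 x hxt hx).2 y hyt hEq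
  · -- the color a is eliminated
    intro x
    by_cases hx : x ∈ td.bag u
    · rw [beta_mem td hcomp u α a hx]
      exact ha x hx
    · obtain ⟨t, ht⟩ := td.mem_bag x
      exact ((main_inv td hcomp u α a hcoh hk (meas td.isTree u t) t le_rfl).1 x ht hx).1
  · -- the recoloring sequence
    have hDCall : DC td hcomp u α a (Changed td hcomp u α a) :=
      ⟨subset_rfl, fun w hw _ _ _ => hw⟩
    have hseq := seq_aux td hcomp u α a hcoh hk hα (Changed td hcomp u α a).card
      (Changed td hcomp u α a) rfl hDCall
    have hgam : gam td hcomp u α a (Changed td hcomp u α a) = beta td hcomp u α a := by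
      funext v
      rw [gam_apply]
      by_cases hv : v ∈ Changed td hcomp u α a
      · rw [if_pos hv]
      · rw [if_neg hv]
        by_contra hne
        exact hv ((changed_iff td hcomp u α a v).2 fun h => hne h.symm)
    rw [hgam] at hseq
    obtain ⟨m, c, h1, h2, h3, h4, h5⟩ := hseq
    refine ⟨m, c, h1, h2, h3, h4, ?_⟩
    intro v
    refine le_trans (h5 v) ?_
    show (if v ∈ Changed td hcomp u α a then 1 else 0) ≤ if v ∈ td.bag u then 0 else 1
    by_cases hv : v ∈ Changed td hcomp u α a
    · rw [if_pos hv, if_neg (changed_not_mem_rootbag td hcomp u α a hv)]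
    · rw [if_neg hv]
      omega


end Decomp


end ElimAux

/-- Let `k ≥ ℓ + 2`, let `T` be an `ℓ`-complete tree decomposition
rooted at `u`, and let `α` be a `(V ∖ B_u)`-coherent proper `k`-coloring in which
some color `a` does not appear on `B_u`. Then, recoloring every vertex of `V ∖ B_u`
at most once and no vertex of `B_u`, one reaches a `(V ∖ B_u)`-coherent proper
`k`-coloring avoiding the color `a` entirely. -/
theorem eliminate_color (n ℓ k : ℕ) (hk : ℓ + 2 ≤ k) (V : Type) [DecidableEq V]
    (G : SimpleGraph V) (td : TreeDecomp G (Fin n)) (hcomp : td.IsComplete ℓ)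
    (u : Fin n)
    (α : V → Fin k) (hα : Proper G α)
    (hcoh : td.Coherent {x : V | x ∉ td.bag u} α)
    (a : Fin k) (ha : ∀ x ∈ td.bag u, α x ≠ a) :
    ∃ β : V → Fin k, td.Coherent {x : V | x ∉ td.bag u} β ∧ (∀ x, β x ≠ a) ∧
      RecolorSeqLe G α β (fun x => if x ∈ td.bag u then 0 else 1) := by
  exact ElimAux.final td hcomp u α a hcoh hk hα ha
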